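/- Let p and q be coprime integers with 1 < p < q. In the formal power series ring ℤ[[X]], the series (1 − X^p)(1 − X^q) is a unit (its constant term is 1), and the n-th coefficient of the power series (1 − X^{pq})·((1 − X^p)(1 − X^q))^{−1} equals 1 if n ∈ S_{p,q} and equals 0 otherwise. -/

import Mathlib

open PowerSeries

open scoped Classical in
theorem torus_knot_semigroup_power_series (p q : ℕ) (hp : 1 < p) (hpq : p < q)
    (hcop : Nat.Coprime p q) :
    IsUnit ((1 - X ^ p) * (1 - X ^ q) : PowerSeries ℤ) ∧
    ∀ n : ℕ,
      PowerSeries.coeff n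
          ((1 - X ^ (p * q)) * Ring.inverse ((1 - X ^ p) * (1 - X ^ q) : PowerSeries ℤ)) =
        if ∃ a b : ℕ, n = a * p + b * q then (1 : ℤ) else 0 := by
  have hp0 : 0 < p := by omega
  have hq0 : 0 < q := by omega
  set U : PowerSeries ℤ := (1 - X ^ p) * (1 - X ^ q) with hUdef
  set A : PowerSeries ℤ := PowerSeries.mk (fun n => if p ∣ n then 1 else 0) with hAdef
  set B : PowerSeries ℤ := ∑ b ∈ Finset.range p, X ^ (b * q) with hBdef
  -- A is the inverse of 1 - X^p
  have hA : A * (1 - X ^ p) = 1 := by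
    ext n
    rw [mul_one_sub, map_sub, PowerSeries.coeff_mul_X_pow', PowerSeries.coeff_one]
    have hcA : ∀ m : ℕ, PowerSeries.coeff m A = if p ∣ m then 1 else 0 := fun m => by
      simp [hAdef]
    rw [hcA n, hcA (n - p)]
    by_cases hn : n = 0
    · subst hn
      rw [if_pos (dvd_zero p), if_neg (by omega : ¬ p ≤ 0), if_pos rfl]; ring
    · rw [if_neg hn]
      by_cases hle : p ≤ n
      · rw [if_pos hle]
        by_cases hd : p ∣ n
        · rw [if_pos hd, if_pos (Nat.dvd_sub hd dvd_rfl)]; ring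
        · rw [if_neg hd, if_neg (fun hd' => hd (by
            have h2 := Nat.sub_add_cancel hle
            exact h2 ▸ Nat.dvd_add hd' dvd_rfl))]
          ring
      · rw [if_neg hle, if_neg (fun hd => hn (Nat.eq_zero_of_dvd_of_lt hd (by omega)))]
        ring
  -- B * (1 - X^q) telescopes
  have hB : B * (1 - X ^ q) = 1 - X ^ (p * q) := by
    rw [hBdef, Finset.sum_mul]
    have : ∀ b ∈ Finset.range p, (X ^ (b * q) * (1 - X ^ q) : PowerSeries ℤ)
        = X ^ (b * q) - X ^ ((b + 1) * q) := by
      intro b _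
      rw [mul_one_sub, ← pow_add]
      ring_nf
    rw [Finset.sum_congr rfl this, Finset.sum_range_sub' (fun b => (X ^ (b * q) : PowerSeries ℤ))]
    simp
  -- coefficient of B
  have hcB : ∀ m : ℕ, PowerSeries.coeff m B
      = if ∃ b : ℕ, b < p ∧ m = b * q then 1 else 0 := by
    intro m
    rw [hBdef, map_sum]
    by_cases h : ∃ b : ℕ, b < p ∧ m = b * q
    · obtain ⟨b0, hb0, rfl⟩ := h
      rw [if_pos ⟨b0, hb0, rfl⟩]
      rw [Finset.sum_eq_single b0]
      · simp [PowerSeries.coeff_X_pow]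
      · intro b hb hne
        rw [PowerSeries.coeff_X_pow, if_neg]
        intro hh
        exact hne (Nat.eq_of_mul_eq_mul_right hq0 hh.symm)
      · intro hb
        exact absurd (Finset.mem_range.mpr hb0) hb
    · rw [if_neg h, Finset.sum_eq_zero]
      intro b hb
      rw [PowerSeries.coeff_X_pow, if_neg]
      intro hh
      exact h ⟨b, Finset.mem_range.mp hb, hh⟩
  have hcA : ∀ m : ℕ, PowerSeries.coeff m A = if p ∣ m then 1 else 0 := fun m => by
    simp [hAdef]
  have hIC : IsCoprime (p : ℤ) (q : ℤ) := Nat.isCoprime_iff_coprime.mpr hcop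
  -- coefficient of A * B is the semigroup indicator
  have hF : ∀ n : ℕ, PowerSeries.coeff n (A * B)
      = if ∃ a b : ℕ, n = a * p + b * q then 1 else 0 := by
    intro n
    rw [PowerSeries.coeff_mul]
    by_cases h : ∃ a b : ℕ, n = a * p + b * q
    · obtain ⟨a, b, rfl⟩ := h
      rw [if_pos ⟨a, b, rfl⟩]
      set r := b % p with hr
      set k := b / p with hk
      have hbr : b = p * k + r := (Nat.div_add_mod b p).symm
      have hrp : r < p := Nat.mod_lt b hp0
      have hrep : a * p + b * q = (a + k * q) * p + r * q := by
        rw [hbr]; ring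
      rw [Finset.sum_eq_single ((a + k * q) * p, r * q)]
      · rw [hcA, hcB]
        dsimp only
        rw [if_pos (dvd_mul_left p (a + k * q)), if_pos ⟨r, hrp, rfl⟩]
        norm_num
      · rintro ⟨i, j⟩ hmem hne
        rw [Finset.HasAntidiagonal.mem_antidiagonal] at hmem
        rw [hcA, hcB]
        by_cases hi : p ∣ i
        · by_cases hj : ∃ b' : ℕ, b' < p ∧ j = b' * q
          · exfalso
            obtain ⟨c, rfl⟩ := hi
            obtain ⟨b', hb', rfl⟩ := hj
            -- uniqueness
            have hnat : p * c + b' * q = (a + k * q) * p + r * q := by rw [hmem, hrep]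
            have heq := congrArg (fun t : ℕ => (t : ℤ)) hnat
            push_cast at heq
            have hdvd : ((b' : ℤ) - r) * q = (p : ℤ) * ((a : ℤ) + k * q - c) := by
              linear_combination heq
            have hdvd : (p : ℤ) ∣ ((b' : ℤ) - r) * q := ⟨(a : ℤ) + k * q - c, hdvd⟩
            have hdvd' : (p : ℤ) ∣ ((b' : ℤ) - r) := hIC.dvd_of_dvd_mul_right hdvd
            have hzero : (b' : ℤ) - r = 0 := by
              refine Int.eq_zero_of_abs_lt_dvd hdvd' ?_
              rw [abs_lt]
              omega
            have hb'r : b' = r := by omega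
            have hceq : c = a + k * q := by
              subst hb'r
              have : (c : ℤ) * p = ((a : ℤ) + k * q) * p := by linarith
              have hpz : (p : ℤ) ≠ 0 := by exact_mod_cast hp0.ne'
              have := mul_right_cancel₀ hpz this
              exact_mod_cast this
            apply hne
            rw [Prod.mk.injEq]
            constructor
            · rw [hceq]; ring
            · rw [hb'r]
          · rw [if_neg hj, mul_zero]
        · rw [if_neg hi, zero_mul]
      · intro hmem
        exfalso
        exact hmem (Finset.HasAntidiagonal.mem_antidiagonal.mpr hrep.symm)
    · rw [if_neg h, Finset.sum_eq_zero]
      rintro ⟨i, j⟩ hmem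
      rw [Finset.HasAntidiagonal.mem_antidiagonal] at hmem
      rw [hcA, hcB]
      by_cases hi : p ∣ i
      · by_cases hj : ∃ b' : ℕ, b' < p ∧ j = b' * q
        · exfalso
          obtain ⟨c, rfl⟩ := hi
          obtain ⟨b', hb', rfl⟩ := hj
          exact h ⟨c, b', by rw [← hmem]; ring⟩
        · rw [if_neg hj, mul_zero]
      · rw [if_neg hi, zero_mul]
  -- U is a unit
  have hU : IsUnit U := by
    rw [PowerSeries.isUnit_iff_constantCoeff]
    have : PowerSeries.constantCoeff U = 1 := by
      simp [hUdef, map_sub, map_pow, hp0.ne', hq0.ne', zero_pow]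
    rw [this]
    exact isUnit_one
  have hKey : (A * B) * U = 1 - X ^ (p * q) := by
    rw [hUdef]
    calc (A * B) * ((1 - X ^ p) * (1 - X ^ q))
        = (A * (1 - X ^ p)) * (B * (1 - X ^ q)) := by ring
      _ = 1 - X ^ (p * q) := by rw [hA, hB, one_mul]
  refine ⟨hU, fun n => ?_⟩
  rw [← hKey, mul_assoc, Ring.mul_inverse_cancel U hU, mul_one, hF]
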